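/- arXiv:0911.0360 — 2 statements merged into one kernel-verified Lean document; each statement's English description precedes it below -/
import Mathlib

section
/- Let ρₘ : [0,1] → ℝ be continuous functions with ρₘ(s) > 0 on [0,1], satisfying ρₘ(s) ≤ ρₘ(sₘ) + C(s−sₘ)^{1/2} for all s ∈ [sₘ,1] with a uniform constant C > 0, where sₘ ∈ [0,1] and ρₘ(sₘ) → 0. Assume moreover that ρₘ(1) = c₀ > 0 for all m. Then ∫₀¹ ρₘ(s)^{-2} ds → +∞ as m → ∞. -/
open Set Filter MeasureTheory

private lemma gordon_key (ρ : ℝ → ℝ) (a C c₀ : ℝ) (hC : 0 < C) (hc₀ : 0 < c₀)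
    (ha : a ∈ Icc (0:ℝ) 1)
    (hcont : ContinuousOn ρ (Icc 0 1))
    (hpos : ∀ s ∈ Icc (0:ℝ) 1, 0 < ρ s)
    (hest : ∀ s ∈ Icc a 1, ρ s ≤ ρ a + C * Real.sqrt (s - a))
    (hend : ρ 1 = c₀) (hsmall : ρ a < c₀ / 2) :
    (2 * C ^ 2)⁻¹ * Real.log (1 + C ^ 2 * (c₀ / (2 * C)) ^ 2 / (ρ a) ^ 2)
      ≤ ∫ s in (0:ℝ)..1, 1 / (ρ s) ^ 2 := by
  set ε := ρ a with hε
  have hεpos : 0 < ε := hpos a ha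
  have ha1 : a ≤ 1 := ha.2
  have ha0 : 0 ≤ a := ha.1
  set δ := 1 - a with hδ
  have hδ0 : 0 ≤ δ := by simp [hδ]; linarith
  -- δ is bounded below
  have hδ₀ : (c₀ / (2 * C)) ^ 2 ≤ δ := by
    have h1 : c₀ ≤ ε + C * Real.sqrt δ := by
      have := hest 1 ⟨ha1, le_refl 1⟩
      rwa [hend] at this
    have h2 : c₀ / 2 ≤ C * Real.sqrt δ := by linarith
    have h3 : c₀ / (2 * C) ≤ Real.sqrt δ := by
      rw [div_le_iff₀ (by positivity : (0:ℝ) < 2 * C)]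
      nlinarith
    exact (Real.le_sqrt (by positivity) hδ0).1 h3
  -- continuity / integrability of the integrand
  have hcont2 : ContinuousOn (fun s => 1 / (ρ s) ^ 2) (Icc 0 1) :=
    continuousOn_const.div (hcont.pow 2) fun s hs => pow_ne_zero 2 (hpos s hs).ne'
  have hint : IntervalIntegrable (fun s => 1 / (ρ s) ^ 2) volume 0 1 := by
    apply ContinuousOn.intervalIntegrable
    rwa [uIcc_of_le zero_le_one]
  have hint1 : IntervalIntegrable (fun s => 1 / (ρ s) ^ 2) volume 0 a :=
    hint.mono_set (by rw [uIcc_of_le ha0, uIcc_of_le zero_le_one]; exact Icc_subset_Icc le_rfl ha1)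
  have hint2 : IntervalIntegrable (fun s => 1 / (ρ s) ^ 2) volume a 1 :=
    hint.mono_set (by rw [uIcc_of_le ha1, uIcc_of_le zero_le_one]; exact Icc_subset_Icc ha0 le_rfl)
  -- the comparison function
  set g : ℝ → ℝ := fun s => 2 * ε ^ 2 + 2 * C ^ 2 * (s - a) with hg
  have hgpos : ∀ s, a ≤ s → 0 < g s := by
    intro s hs
    have h1 : 0 ≤ C ^ 2 * (s - a) := mul_nonneg (sq_nonneg C) (by linarith)
    simp only [hg]; nlinarith
  have hgcont : ContinuousOn (fun s => 1 / g s) (Icc a 1) := by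
    apply continuousOn_const.div (by fun_prop)
    intro s hs; exact (hgpos s hs.1).ne'
  have hintg : IntervalIntegrable (fun s => 1 / g s) volume a 1 := by
    apply ContinuousOn.intervalIntegrable
    rwa [uIcc_of_le ha1]
  -- pointwise comparison on [a,1]
  have hcmp : ∀ s ∈ Icc a 1, 1 / g s ≤ 1 / (ρ s) ^ 2 := by
    intro s hs
    have hs01 : s ∈ Icc (0:ℝ) 1 := ⟨le_trans ha0 hs.1, hs.2⟩
    have hρ : 0 < ρ s := hpos s hs01
    have hb := hest s hs
    have hsa : 0 ≤ s - a := by linarith [hs.1]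
    set t := Real.sqrt (s - a) with ht
    have ht2 : t ^ 2 = s - a := Real.sq_sqrt hsa
    have ht0 : 0 ≤ t := Real.sqrt_nonneg _
    have hsq : (ρ s) ^ 2 ≤ g s := by
      simp only [hg, ← ht2]
      nlinarith [sq_nonneg (ε - C * t), sq_nonneg (C * t)]
    exact one_div_le_one_div_of_le (by positivity) hsq
  have hmono : ∫ s in a..1, 1 / g s ≤ ∫ s in a..1, 1 / (ρ s) ^ 2 :=
    intervalIntegral.integral_mono_on ha1 hintg hint2 hcmp
  -- compute ∫ 1/g via FTC
  set F : ℝ → ℝ := fun s => (2 * C ^ 2)⁻¹ * Real.log (g s) with hF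
  have hderiv : ∀ s ∈ uIcc a 1, HasDerivAt F (1 / g s) s := by
    intro s hs
    rw [uIcc_of_le ha1] at hs
    have hgs : 0 < g s := hgpos s hs.1
    have h1 : HasDerivAt g (2 * C ^ 2) s := by
      have := (((hasDerivAt_id s).sub_const a).const_mul (2 * C ^ 2)).const_add (2 * ε ^ 2)
      rw [mul_one] at this; exact this
    have h2 : HasDerivAt F ((2 * C ^ 2)⁻¹ * (2 * C ^ 2 / g s)) s :=
      (h1.log hgs.ne').const_mul _
    convert h2 using 1
    field_simp
  have hFTC : ∫ s in a..1, 1 / g s = F 1 - F a :=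
    intervalIntegral.integral_eq_sub_of_hasDerivAt hderiv hintg
  -- lower bound F 1 - F a
  have hga : g a = 2 * ε ^ 2 := by simp [hg]
  have hg1 : g 1 = 2 * ε ^ 2 + 2 * C ^ 2 * δ := by simp [hg, hδ]
  have hlb : (2 * C ^ 2)⁻¹ * Real.log (1 + C ^ 2 * (c₀ / (2 * C)) ^ 2 / ε ^ 2)
      ≤ F 1 - F a := by
    have hgapos : (0:ℝ) < 2 * ε ^ 2 := by positivity
    have hg1pos : 0 < g 1 := hgpos 1 ha1
    have hlog : Real.log (g 1) - Real.log (g a) = Real.log (g 1 / g a) :=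
      (Real.log_div hg1pos.ne' (by rw [hga]; exact hgapos.ne')).symm
    have hratio : g 1 / g a = 1 + C ^ 2 * δ / ε ^ 2 := by
      rw [hga, hg1]; field_simp
    have hmono2 : Real.log (1 + C ^ 2 * (c₀ / (2 * C)) ^ 2 / ε ^ 2)
        ≤ Real.log (1 + C ^ 2 * δ / ε ^ 2) := by
      apply Real.log_le_log (by positivity)
      have : C ^ 2 * (c₀ / (2 * C)) ^ 2 / ε ^ 2 ≤ C ^ 2 * δ / ε ^ 2 := by
        apply div_le_div_of_nonneg_right ?_ (by positivity) |>.trans_eq rfl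
        nlinarith
      linarith
    have : F 1 - F a = (2 * C ^ 2)⁻¹ * Real.log (1 + C ^ 2 * δ / ε ^ 2) := by
      simp only [hF]
      rw [← mul_sub, hlog, hratio]
    rw [this]
    apply mul_le_mul_of_nonneg_left hmono2 (by positivity)
  -- assemble
  have hsplit : ∫ s in (0:ℝ)..1, 1 / (ρ s) ^ 2
      = (∫ s in (0:ℝ)..a, 1 / (ρ s) ^ 2) + ∫ s in a..1, 1 / (ρ s) ^ 2 :=
    (intervalIntegral.integral_add_adjacent_intervals hint1 hint2).symm
  have hnn : 0 ≤ ∫ s in (0:ℝ)..a, 1 / (ρ s) ^ 2 :=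
    intervalIntegral.integral_nonneg ha0 fun s _ => by positivity
  calc (2 * C ^ 2)⁻¹ * Real.log (1 + C ^ 2 * (c₀ / (2 * C)) ^ 2 / ε ^ 2)
      ≤ F 1 - F a := hlb
    _ = ∫ s in a..1, 1 / g s := hFTC.symm
    _ ≤ ∫ s in a..1, 1 / (ρ s) ^ 2 := hmono
    _ ≤ ∫ s in (0:ℝ)..1, 1 / (ρ s) ^ 2 := by rw [hsplit]; linarith

/-- **Abstract Gordon's lemma (Lemma 4.2).** If `ρₘ : [0,1] → (0,∞)` are continuous,
satisfy the uniform Hölder-type bound `ρₘ(s) ≤ ρₘ(sₘ) + C √(s−sₘ)` on `[sₘ,1]`, the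
minima `ρₘ(sₘ)` tend to `0` and `ρₘ(1) = c₀ > 0` for all `m`, then
`∫₀¹ ρₘ(s)⁻² ds → +∞`. -/
theorem stmt10 (ρ : ℕ → ℝ → ℝ) (sm : ℕ → ℝ) (C c₀ : ℝ) (hC : 0 < C) (hc₀ : 0 < c₀)
    (hsm : ∀ m, sm m ∈ Icc (0:ℝ) 1)
    (hcont : ∀ m, ContinuousOn (ρ m) (Icc 0 1))
    (hpos : ∀ m, ∀ s ∈ Icc (0:ℝ) 1, 0 < ρ m s)
    (hest : ∀ m, ∀ s ∈ Icc (sm m) 1, ρ m s ≤ ρ m (sm m) + C * Real.sqrt (s - sm m))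
    (hmin : Tendsto (fun m => ρ m (sm m)) atTop (nhds 0))
    (hend : ∀ m, ρ m 1 = c₀) :
    Tendsto (fun m => ∫ s in (0:ℝ)..1, 1 / (ρ m s) ^ 2) atTop atTop := by
  set δ₀ := (c₀ / (2 * C)) ^ 2 with hδ₀
  set G : ℕ → ℝ := fun m => (2 * C ^ 2)⁻¹ * Real.log (1 + C ^ 2 * δ₀ / (ρ m (sm m)) ^ 2)
    with hG
  have hεpos : ∀ m, 0 < ρ m (sm m) := fun m => hpos m (sm m) (hsm m)
  have hGtop : Tendsto G atTop atTop := by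
    have h1 : Tendsto (fun m => (ρ m (sm m)) ^ 2) atTop (nhdsWithin 0 (Ioi 0)) := by
      apply tendsto_nhdsWithin_of_tendsto_nhds_of_eventually_within
      · simpa using hmin.pow 2
      · exact Eventually.of_forall fun m => pow_pos (hεpos m) 2
    have h2 : Tendsto (fun m => ((ρ m (sm m)) ^ 2)⁻¹) atTop atTop :=
      tendsto_inv_nhdsGT_zero.comp h1
    have hcpos : 0 < C ^ 2 * δ₀ := by positivity
    have h3 : Tendsto (fun m => C ^ 2 * δ₀ / (ρ m (sm m)) ^ 2) atTop atTop := by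
      simp only [div_eq_mul_inv]
      exact h2.const_mul_atTop hcpos
    have h4 : Tendsto (fun m => 1 + C ^ 2 * δ₀ / (ρ m (sm m)) ^ 2) atTop atTop :=
      tendsto_atTop_add_const_left _ 1 h3
    have h5 := Real.tendsto_log_atTop.comp h4
    exact (h5.const_mul_atTop (by positivity : (0:ℝ) < (2 * C ^ 2)⁻¹)).congr
      (fun m => by simp [hG, mul_comm])
  apply tendsto_atTop_mono' atTop ?_ hGtop
  have hev : ∀ᶠ m in atTop, ρ m (sm m) < c₀ / 2 :=
    hmin.eventually_lt_const (by positivity)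
  filter_upwards [hev] with m hm
  exact gordon_key (ρ m) (sm m) C c₀ hC hc₀ (hsm m) (hcont m) (hpos m) (hest m) (hend m) hm
end

section
/- Let G : ℝⁿ → ℝ be continuous, C² on ℝⁿ∖{0}, positively homogeneous of degree 2, vanishing only at 0, with positive definite Hessian ½∂²G(y) for all y ≠ 0. Then the Legendre map L : ℝⁿ → ℝⁿ, L(y) = ½∂G(y) for y ≠ 0 and L(0) = 0, is a homeomorphism of ℝⁿ. -/
open Set InnerProductSpace

open scoped RealInnerProductSpace

section LegendreAux

variable {n : ℕ}

private lemma legendre_euler (G : EuclideanSpace ℝ (Fin n) → ℝ)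
    (hC2 : ContDiffOn ℝ 2 G {y : EuclideanSpace ℝ (Fin n) | y ≠ 0})
    (hhomog : ∀ (y : EuclideanSpace ℝ (Fin n)) (lam : ℝ), 0 < lam →
      G (lam • y) = lam ^ 2 * G y)
    (y : EuclideanSpace ℝ (Fin n)) (hy : y ≠ 0) : fderiv ℝ G y y = 2 * G y := by
  have hs : IsOpen {y : EuclideanSpace ℝ (Fin n) | y ≠ 0} := isOpen_ne
  have hdiff : DifferentiableAt ℝ G y :=
    (hC2.contDiffAt (hs.mem_nhds hy)).differentiableAt (by norm_num)
  have hc : HasDerivAt (fun t : ℝ => t • y) y 1 := by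
    simpa using (hasDerivAt_id (1:ℝ)).smul_const y
  have h1 : HasDerivAt (fun t : ℝ => G (t • y)) (fderiv ℝ G y y) 1 := by
    have hd : HasFDerivAt G (fderiv ℝ G y) ((1:ℝ) • y) := by simpa using hdiff.hasFDerivAt
    have := hd.comp_hasDerivAt (1:ℝ) hc
    exact this
  have h2 : HasDerivAt (fun t : ℝ => t ^ 2 * G y) (2 * G y) 1 := by
    simpa using (hasDerivAt_pow 2 (1:ℝ)).mul_const (G y)
  have heq : (fun t : ℝ => t ^ 2 * G y) =ᶠ[nhds 1] (fun t : ℝ => G (t • y)) := by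
    filter_upwards [eventually_gt_nhds zero_lt_one] with t ht
    exact (hhomog y t ht).symm
  exact ((h2.congr_of_eventuallyEq heq.symm).unique h1).symm

private lemma legendre_fderiv_homog (G : EuclideanSpace ℝ (Fin n) → ℝ)
    (hC2 : ContDiffOn ℝ 2 G {y : EuclideanSpace ℝ (Fin n) | y ≠ 0})
    (hhomog : ∀ (y : EuclideanSpace ℝ (Fin n)) (lam : ℝ), 0 < lam →
      G (lam • y) = lam ^ 2 * G y)
    (y : EuclideanSpace ℝ (Fin n)) (hy : y ≠ 0) (lam : ℝ) (hlam : 0 < lam) :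
    fderiv ℝ G (lam • y) = lam • fderiv ℝ G y := by
  have hs : IsOpen {y : EuclideanSpace ℝ (Fin n) | y ≠ 0} := isOpen_ne
  have hdiff : ∀ z : EuclideanSpace ℝ (Fin n), z ≠ 0 → DifferentiableAt ℝ G z := fun z hz =>
    (hC2.contDiffAt (hs.mem_nhds hz)).differentiableAt (by norm_num)
  have hly : lam • y ≠ 0 := smul_ne_zero hlam.ne' hy
  have h1 : HasFDerivAt (fun z : EuclideanSpace ℝ (Fin n) => G (lam • z))
      ((fderiv ℝ G (lam • y)).comp (lam • ContinuousLinearMap.id ℝ (EuclideanSpace ℝ (Fin n)))) y :=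
    (hdiff _ hly).hasFDerivAt.comp y ((hasFDerivAt_id y).const_smul lam)
  have h2 : HasFDerivAt (fun z : EuclideanSpace ℝ (Fin n) => G (lam • z))
      (lam ^ 2 • fderiv ℝ G y) y := by
    have h3 : HasFDerivAt (fun z : EuclideanSpace ℝ (Fin n) => lam ^ 2 * G z)
        (lam ^ 2 • fderiv ℝ G y) y := (hdiff y hy).hasFDerivAt.const_mul (lam ^ 2)
    exact h3.congr_of_eventuallyEq (Filter.Eventually.of_forall fun z => (hhomog z lam hlam))
  have h4 := h1.unique h2
  ext u
  have := congrArg (fun (T : EuclideanSpace ℝ (Fin n) →L[ℝ] ℝ) => T u) h4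
  simp only [ContinuousLinearMap.comp_apply, ContinuousLinearMap.smul_apply,
    ContinuousLinearMap.id_apply, smul_eq_mul] at this ⊢
  have h5 : lam * fderiv ℝ G (lam • y) u = lam ^ 2 * fderiv ℝ G y u := by
    simpa [map_smul, smul_eq_mul] using this
  have := mul_left_cancel₀ hlam.ne'
    (by nlinarith [h5] : lam * fderiv ℝ G (lam • y) u = lam * (lam * fderiv ℝ G y u))
  simpa [mul_comm] using this

private lemma legendre_mono_seg (G : EuclideanSpace ℝ (Fin n) → ℝ)
    (hC2 : ContDiffOn ℝ 2 G {y : EuclideanSpace ℝ (Fin n) | y ≠ 0})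
    (hposdef : ∀ y : EuclideanSpace ℝ (Fin n), y ≠ 0 →
      ∀ u : EuclideanSpace ℝ (Fin n), u ≠ 0 → 0 < (1 / 2 : ℝ) * fderiv ℝ (fderiv ℝ G) y u u)
    (y z : EuclideanSpace ℝ (Fin n)) (hne : y ≠ z)
    (hseg : ∀ t ∈ Icc (0:ℝ) 1, z + t • (y - z) ≠ 0) :
    0 < fderiv ℝ G y (y - z) - fderiv ℝ G z (y - z) := by
  have hs : IsOpen {y : EuclideanSpace ℝ (Fin n) | y ≠ 0} := isOpen_ne
  set c : ℝ → EuclideanSpace ℝ (Fin n) := fun t => z + t • (y - z) with hc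
  set ψ : ℝ → ℝ := fun t => fderiv ℝ G (c t) (y - z) with hψ
  have hu : y - z ≠ 0 := sub_ne_zero.mpr hne
  have hD : ∀ t ∈ Icc (0:ℝ) 1,
      HasDerivAt ψ (fderiv ℝ (fderiv ℝ G) (c t) (y - z) (y - z)) t := by
    intro t ht
    have hct : c t ≠ 0 := hseg t ht
    have hdc : HasDerivAt c (y - z) t := by
      exact (((hasDerivAt_id t).smul_const (y - z)).const_add z).congr_deriv (one_smul _ _)
    have hdf : DifferentiableAt ℝ (fderiv ℝ G) (c t) :=
      ((hC2.contDiffAt (hs.mem_nhds hct)).fderiv_right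
        (by norm_num : (1:WithTop ℕ∞) + 1 ≤ 2)).differentiableAt one_ne_zero
    have h1 : HasDerivAt (fun t => fderiv ℝ G (c t))
        (fderiv ℝ (fderiv ℝ G) (c t) (y - z)) t :=
      hdf.hasFDerivAt.comp_hasDerivAt t hdc
    have := h1.clm_apply (hasDerivAt_const t (y - z))
    simpa only [map_zero, add_zero] using this
  have hmono : StrictMonoOn ψ (Icc (0:ℝ) 1) := by
    apply strictMonoOn_of_deriv_pos (convex_Icc 0 1)
    · exact fun t ht => (hD t ht).continuousAt.continuousWithinAt
    · intro t ht
      rw [interior_Icc] at ht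
      rw [(hD t (Ioo_subset_Icc_self ht)).deriv]
      have := hposdef (c t) (hseg t (Ioo_subset_Icc_self ht)) (y - z) hu
      linarith
  have h01 := hmono (left_mem_Icc.mpr zero_le_one) (right_mem_Icc.mpr zero_le_one) zero_lt_one
  have h0 : c 0 = z := by simp [hc]
  have h1 : c 1 = y := by simp [hc]
  have e0 : ψ 0 = fderiv ℝ G z (y - z) := by rw [hψ]; simp [h0]
  have e1 : ψ 1 = fderiv ℝ G y (y - z) := by rw [hψ]; simp [h1]
  rw [← e0, ← e1]; linarith

private lemma legendre_surj_aux (G : EuclideanSpace ℝ (Fin n) → ℝ)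
    (hcont : Continuous G)
    (hC2 : ContDiffOn ℝ 2 G {y : EuclideanSpace ℝ (Fin n) | y ≠ 0})
    (hhomog : ∀ (y : EuclideanSpace ℝ (Fin n)) (lam : ℝ), 0 < lam →
      G (lam • y) = lam ^ 2 * G y)
    (hzero : ∀ y : EuclideanSpace ℝ (Fin n), G y = 0 ↔ y = 0)
    (hpos : ∀ y : EuclideanSpace ℝ (Fin n), y ≠ 0 → 0 < G y)
    (c : ℝ) (hcpos : 0 < c) (hlow : ∀ y : EuclideanSpace ℝ (Fin n), c * ‖y‖ ^ 2 ≤ G y)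
    (p : EuclideanSpace ℝ (Fin n)) (hp : p ≠ 0) :
    ∃ y : EuclideanSpace ℝ (Fin n), y ≠ 0 ∧ gradient G y = (2:ℝ) • p := by
  have hs : IsOpen {y : EuclideanSpace ℝ (Fin n) | y ≠ 0} := isOpen_ne
  have hdiff : ∀ z : EuclideanSpace ℝ (Fin n), z ≠ 0 → DifferentiableAt ℝ G z := fun z hz =>
    (hC2.contDiffAt (hs.mem_nhds hz)).differentiableAt (by norm_num)
  set F : EuclideanSpace ℝ (Fin n) → ℝ := fun y => G y - 2 * ⟪p, y⟫_ℝ with hF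
  have hFcont : Continuous F :=
    hcont.sub (continuous_const.mul (continuous_const.inner continuous_id))
  set t0 : ℝ := ‖p‖ ^ 2 / G p with ht0
  have hGp : 0 < G p := hpos p hp
  have hnp : 0 < ‖p‖ := norm_pos_iff.mpr hp
  have ht0pos : 0 < t0 := div_pos (by positivity) hGp
  have hFt0 : F (t0 • p) < 0 := by
    have h1 : G (t0 • p) = t0 ^ 2 * G p := hhomog p t0 ht0pos
    have h2 : ⟪p, t0 • p⟫_ℝ = t0 * ‖p‖ ^ 2 := by
      rw [real_inner_smul_right, real_inner_self_eq_norm_sq]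
    have h3 : t0 * G p = ‖p‖ ^ 2 := div_mul_cancel₀ _ hGp.ne'
    have h5 : F (t0 • p) = t0 ^ 2 * G p - 2 * (t0 * ‖p‖ ^ 2) := by
      simp only [hF]; rw [h1, h2]
    have h4 : t0 ^ 2 * G p = t0 * ‖p‖ ^ 2 := by rw [pow_two, mul_assoc, h3]
    rw [h5, h4]
    nlinarith [mul_pos ht0pos (pow_pos hnp 2)]
  set R : ℝ := max (2 * ‖p‖ / c + 1) (‖t0 • p‖) with hR
  have hRpos : 0 < R := lt_of_lt_of_le (by positivity) (le_max_left _ _)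
  have hball : IsCompact (Metric.closedBall (0:EuclideanSpace ℝ (Fin n)) R) :=
    isCompact_closedBall 0 R
  obtain ⟨y₀, hy₀mem, hy₀min⟩ := hball.exists_isMinOn
    ⟨0, Metric.mem_closedBall_self hRpos.le⟩ hFcont.continuousOn
  have ht0mem : t0 • p ∈ Metric.closedBall (0:EuclideanSpace ℝ (Fin n)) R := by
    simp only [Metric.mem_closedBall, dist_zero_right]
    exact le_max_right _ _
  have hFy₀neg : F y₀ < 0 := lt_of_le_of_lt (hy₀min ht0mem) hFt0
  have hG0 : G 0 = 0 := (hzero 0).mpr rfl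
  have hy₀ne : y₀ ≠ 0 := by
    intro h
    rw [h] at hFy₀neg
    simp [hF, hG0] at hFy₀neg
  have hFbound : ∀ y : EuclideanSpace ℝ (Fin n), c * ‖y‖ ^ 2 - 2 * ‖p‖ * ‖y‖ ≤ F y := by
    intro y
    have h1 := hlow y
    have h2 : ⟪p, y⟫_ℝ ≤ ‖p‖ * ‖y‖ := real_inner_le_norm p y
    simp only [hF]
    nlinarith
  have hy₀lt : ‖y₀‖ < R := by
    by_contra h
    push_neg at h
    have hnorm : ‖y₀‖ = R := le_antisymm (by simpa [dist_zero_right] using hy₀mem) h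
    have h1 := hFbound y₀
    rw [hnorm] at h1
    have h2 : 2 * ‖p‖ / c + 1 ≤ R := le_max_left _ _
    have h3 : 2 * ‖p‖ < c * R := by
      have : 2 * ‖p‖ / c < R := lt_of_lt_of_le (lt_add_one _) h2
      calc 2 * ‖p‖ = c * (2 * ‖p‖ / c) := by field_simp
      _ < c * R := by exact (mul_lt_mul_iff_right₀ hcpos).mpr this
    nlinarith
  have hlocmin : IsLocalMin F y₀ := by
    apply hy₀min.isLocalMin
    exact Filter.mem_of_superset
      ((Metric.isOpen_ball).mem_nhds (by simpa [dist_zero_right] using hy₀lt))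
      Metric.ball_subset_closedBall
  have hFd : HasFDerivAt F (fderiv ℝ G y₀ -
      (2:ℝ) • (innerSL ℝ p : EuclideanSpace ℝ (Fin n) →L[ℝ] ℝ)) y₀ := by
    have h1 : HasFDerivAt (fun y : EuclideanSpace ℝ (Fin n) => 2 * ⟪p, y⟫_ℝ)
        ((2:ℝ) • (innerSL ℝ p : EuclideanSpace ℝ (Fin n) →L[ℝ] ℝ)) y₀ :=
      (innerSL ℝ p).hasFDerivAt.const_mul 2
    exact (hdiff y₀ hy₀ne).hasFDerivAt.sub h1
  have hfz : fderiv ℝ G y₀ - (2:ℝ) • (innerSL ℝ p : EuclideanSpace ℝ (Fin n) →L[ℝ] ℝ) = 0 := by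
    rw [← hFd.fderiv]
    exact hlocmin.fderiv_eq_zero
  have hfG : ∀ u : EuclideanSpace ℝ (Fin n), fderiv ℝ G y₀ u = ⟪(2:ℝ) • p, u⟫_ℝ := by
    intro u
    have := congrArg (fun (T : EuclideanSpace ℝ (Fin n) →L[ℝ] ℝ) => T u) hfz
    simp only [ContinuousLinearMap.sub_apply, ContinuousLinearMap.smul_apply,
      ContinuousLinearMap.zero_apply, innerSL_apply_apply, smul_eq_mul] at this
    rw [inner_smul_left]
    simp only [RCLike.conj_to_real]
    linarith
  refine ⟨y₀, hy₀ne, ?_⟩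
  have key : ∀ u : EuclideanSpace ℝ (Fin n), ⟪gradient G y₀ - (2:ℝ) • p, u⟫_ℝ = 0 := by
    intro u
    rw [inner_sub_left, gradient, toDual_symm_apply, hfG u]
    ring
  have := key (gradient G y₀ - (2:ℝ) • p)
  rw [inner_self_eq_zero] at this
  exact sub_eq_zero.mp this

end LegendreAux

set_option maxHeartbeats 2000000 in
/-- **The fiberwise Legendre transform is a homeomorphism.** Let `G : ℝⁿ → ℝ` be
continuous, `C²` away from `0`, positively homogeneous of degree `2`, vanishing only at
`0`, with positive definite Hessian `½∂²G(y)` for `y ≠ 0`. Then the Legendre map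
`L(y) = ½∇G(y)` for `y ≠ 0`, `L(0) = 0`, is a homeomorphism of `ℝⁿ`. -/
theorem stmt12 (n : ℕ) (G : EuclideanSpace ℝ (Fin n) → ℝ)
    (hcont : Continuous G)
    (hC2 : ContDiffOn ℝ 2 G {y : EuclideanSpace ℝ (Fin n) | y ≠ 0})
    (hhomog : ∀ (y : EuclideanSpace ℝ (Fin n)) (lam : ℝ), 0 < lam →
      G (lam • y) = lam ^ 2 * G y)
    (hzero : ∀ y : EuclideanSpace ℝ (Fin n), G y = 0 ↔ y = 0)
    (hpos : ∀ y : EuclideanSpace ℝ (Fin n), y ≠ 0 → 0 < G y)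
    (hposdef : ∀ y : EuclideanSpace ℝ (Fin n), y ≠ 0 →
      ∀ u : EuclideanSpace ℝ (Fin n), u ≠ 0 → 0 < (1 / 2 : ℝ) * fderiv ℝ (fderiv ℝ G) y u u) :
    ∃ h : EuclideanSpace ℝ (Fin n) ≃ₜ EuclideanSpace ℝ (Fin n),
      (h 0 = 0) ∧ ∀ y : EuclideanSpace ℝ (Fin n), y ≠ 0 →
        h y = (1 / 2 : ℝ) • gradient G y := by
  rcases Nat.eq_zero_or_pos n with hn | hn
  · -- trivial case `n = 0`
    subst hn
    refine ⟨Homeomorph.refl _, rfl, fun y hy => absurd (Subsingleton.elim y 0) hy⟩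
  -- setup
  have hnt : Nontrivial (EuclideanSpace ℝ (Fin n)) := by
    apply Module.nontrivial_of_finrank_pos (R := ℝ)
    rw [finrank_euclideanSpace_fin]
    exact hn
  have hs : IsOpen {y : EuclideanSpace ℝ (Fin n) | y ≠ 0} := isOpen_ne
  have hdiff : ∀ z : EuclideanSpace ℝ (Fin n), z ≠ 0 → DifferentiableAt ℝ G z := fun z hz =>
    (hC2.contDiffAt (hs.mem_nhds hz)).differentiableAt (by norm_num)
  have hG0 : G 0 = 0 := (hzero 0).mpr rfl
  classical
  set L : EuclideanSpace ℝ (Fin n) → EuclideanSpace ℝ (Fin n) :=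
    fun y => if y = 0 then 0 else (1 / 2 : ℝ) • gradient G y with hLdef
  have hL0 : L 0 = 0 := if_pos rfl
  have hLy : ∀ y : EuclideanSpace ℝ (Fin n), y ≠ 0 → L y = (1 / 2 : ℝ) • gradient G y :=
    fun y hy => if_neg hy
  have hInner : ∀ y u : EuclideanSpace ℝ (Fin n), ⟪gradient G y, u⟫_ℝ = fderiv ℝ G y u :=
    fun y u => by rw [gradient, toDual_symm_apply]
  -- Euler identity for `L`
  have hEuler : ∀ y : EuclideanSpace ℝ (Fin n), ⟪L y, y⟫_ℝ = G y := by
    intro y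
    by_cases hy : y = 0
    · subst hy; rw [hL0, hG0, inner_zero_left]
    · rw [hLy y hy, real_inner_smul_left, hInner, legendre_euler G hC2 hhomog y hy]
      ring
  -- homogeneity of `L`
  have hLhom : ∀ (y : EuclideanSpace ℝ (Fin n)) (lam : ℝ), 0 < lam →
      L (lam • y) = lam • L y := by
    intro y lam hlam
    by_cases hy : y = 0
    · subst hy; rw [smul_zero, hL0, smul_zero]
    · have hly : lam • y ≠ 0 := smul_ne_zero hlam.ne' hy
      rw [hLy _ hly, hLy _ hy]
      rw [gradient, gradient, legendre_fderiv_homog G hC2 hhomog y hy lam hlam, map_smul]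
      rw [smul_comm]
  -- lower bound for `G`
  obtain ⟨v0, hv0mem, hv0min⟩ := (isCompact_sphere (0:EuclideanSpace ℝ (Fin n)) 1).exists_isMinOn
    (NormedSpace.sphere_nonempty.mpr zero_le_one) hcont.continuousOn
  have hv0ne : v0 ≠ 0 := by
    intro h
    rw [mem_sphere_zero_iff_norm, h, norm_zero] at hv0mem
    norm_num at hv0mem
  set c : ℝ := G v0 with hcdef
  have hcpos : 0 < c := hpos v0 hv0ne
  have hGlower : ∀ y : EuclideanSpace ℝ (Fin n), c * ‖y‖ ^ 2 ≤ G y := by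
    intro y
    by_cases hy : y = 0
    · subst hy; simp [hG0]
    · have hny : 0 < ‖y‖ := norm_pos_iff.mpr hy
      set u : EuclideanSpace ℝ (Fin n) := ‖y‖⁻¹ • y with hu
      have humem : u ∈ Metric.sphere (0:EuclideanSpace ℝ (Fin n)) 1 := by
        rw [mem_sphere_zero_iff_norm]
        rw [hu, norm_smul, norm_inv, norm_norm, inv_mul_cancel₀ hny.ne']
      have hcu : c ≤ G u := hv0min humem
      have hyu : ‖y‖ • u = y := by rw [hu, smul_smul, mul_inv_cancel₀ hny.ne', one_smul]
      have := hhomog u ‖y‖ hny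
      rw [hyu] at this
      nlinarith [sq_nonneg ‖y‖]
  -- continuity of `L`
  have hLcontOn : ContinuousOn L {y : EuclideanSpace ℝ (Fin n) | y ≠ 0} := by
    have h1 : ContinuousOn (fderiv ℝ G) {y : EuclideanSpace ℝ (Fin n) | y ≠ 0} :=
      hC2.continuousOn_fderiv_of_isOpen hs (by norm_num)
    have h2 : ContinuousOn (fun y => gradient G y) {y : EuclideanSpace ℝ (Fin n) | y ≠ 0} :=
      ((toDual ℝ (EuclideanSpace ℝ (Fin n))).symm.continuous.comp_continuousOn h1)
    exact (h2.const_smul (1 / 2 : ℝ)).congr fun y hy => by rw [hLy y hy, Pi.smul_apply]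
  -- bound `‖L y‖ ≤ M ‖y‖`
  obtain ⟨w0, hw0mem, hw0max⟩ := (isCompact_sphere (0:EuclideanSpace ℝ (Fin n)) 1).exists_isMaxOn
    (NormedSpace.sphere_nonempty.mpr zero_le_one)
    ((continuous_norm.comp_continuousOn (hLcontOn.mono (fun y hy => by
      rw [mem_sphere_zero_iff_norm] at hy
      intro h
      rw [h, norm_zero] at hy
      exact one_ne_zero hy.symm))))
  set M : ℝ := ‖L w0‖ with hMdef
  have hMnonneg : 0 ≤ M := norm_nonneg _
  have hLbound : ∀ y : EuclideanSpace ℝ (Fin n), ‖L y‖ ≤ M * ‖y‖ := by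
    intro y
    by_cases hy : y = 0
    · subst hy; rw [hL0]; simp
    · have hny : 0 < ‖y‖ := norm_pos_iff.mpr hy
      set u : EuclideanSpace ℝ (Fin n) := ‖y‖⁻¹ • y with hu
      have humem : u ∈ Metric.sphere (0:EuclideanSpace ℝ (Fin n)) 1 := by
        rw [mem_sphere_zero_iff_norm, hu, norm_smul, norm_inv, norm_norm,
          inv_mul_cancel₀ hny.ne']
      have hyu : ‖y‖ • u = y := by rw [hu, smul_smul, mul_inv_cancel₀ hny.ne', one_smul]
      have h1 : L y = ‖y‖ • L u := by rw [← hLhom u ‖y‖ hny, hyu]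
      rw [h1, norm_smul, norm_norm]
      have h2 : ‖L u‖ ≤ M := hw0max humem
      nlinarith
  have hLcont : Continuous L := by
    rw [continuous_iff_continuousAt]
    intro y
    by_cases hy : y = 0
    · subst hy
      unfold ContinuousAt
      rw [hL0]
      exact squeeze_zero_norm hLbound (by
        have : Filter.Tendsto (fun y : EuclideanSpace ℝ (Fin n) => M * ‖y‖) (nhds 0)
            (nhds (M * ‖(0:EuclideanSpace ℝ (Fin n))‖)) :=
          (continuous_const.mul continuous_norm).tendsto 0
        simpa using this)
    · exact hLcontOn.continuousAt (hs.mem_nhds hy)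
  -- strict monotonicity of `L`
  have hmono : ∀ y z : EuclideanSpace ℝ (Fin n), y ≠ z → 0 < ⟪L y - L z, y - z⟫_ℝ := by
    intro y z hne
    by_cases hy0 : y = 0
    · subst hy0
      rw [hL0, zero_sub, zero_sub, inner_neg_neg, hEuler]
      exact hpos z (Ne.symm hne)
    by_cases hz0 : z = 0
    · subst hz0
      rw [hL0, sub_zero, sub_zero, hEuler]
      exact hpos y hy0
    by_cases hseg0 : (0:EuclideanSpace ℝ (Fin n)) ∈ segment ℝ z y
    · obtain ⟨a, b, ha, hb, hab, habe⟩ := hseg0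
      have ha0 : a ≠ 0 := by
        intro h
        rw [h, zero_smul, zero_add] at habe
        have hb1 : b = 1 := by rw [h] at hab; linarith
        rw [hb1, one_smul] at habe
        exact hy0 habe
      have hb0 : b ≠ 0 := by
        intro h
        rw [h, zero_smul, add_zero] at habe
        have ha1 : a = 1 := by rw [h] at hab; linarith
        rw [ha1, one_smul] at habe
        exact hz0 habe
      set μ : ℝ := b / a with hμdef
      have hμpos : 0 < μ := div_pos (lt_of_le_of_ne hb (Ne.symm hb0)) (lt_of_le_of_ne ha (Ne.symm ha0))
      have hz' : z = μ • (-y) := by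
        have h1 : a • z = b • (-y) := by
          rw [smul_neg]
          exact eq_neg_of_add_eq_zero_left habe
        have := congrArg (fun w => a⁻¹ • w) h1
        simpa [smul_smul, inv_mul_cancel₀ ha0, hμdef, div_eq_inv_mul] using this
      have hny : -y ≠ 0 := neg_ne_zero.mpr hy0
      have hLz : L z = μ • L (-y) := by rw [hz', hLhom (-y) μ hμpos]
      have hsub : y - z = (1 + μ) • y := by
        rw [hz']
        module
      have hLny : ⟪L (-y), y⟫_ℝ = -G (-y) := by
        have := hEuler (-y)
        rw [inner_neg_right] at this
        linarith
      rw [hLz, hsub, real_inner_smul_right, inner_sub_left, real_inner_smul_left, hEuler, hLny]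
      have h1 : 0 < G y := hpos y hy0
      have h2 : 0 < G (-y) := hpos (-y) hny
      have h3 : 0 < G y - μ * -G (-y) := by nlinarith [mul_pos hμpos h2]
      exact mul_pos (by linarith) h3
    · have hseg : ∀ t ∈ Icc (0:ℝ) 1, z + t • (y - z) ≠ 0 := by
        intro t ht h
        apply hseg0
        rw [segment_eq_image']
        exact ⟨t, ht, h⟩
      have hkey := legendre_mono_seg G hC2 hposdef y z (fun h => hne h) hseg
      rw [hLy y hy0, hLy z hz0, ← smul_sub, real_inner_smul_left, inner_sub_left,
        hInner, hInner]
      linarith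
  -- injectivity
  have hinj : Function.Injective L := by
    intro y z h
    by_contra hne
    have := hmono y z hne
    rw [h, sub_self, inner_zero_left] at this
    exact lt_irrefl 0 this
  -- surjectivity
  have hsurj : Function.Surjective L := by
    intro p
    by_cases hp : p = 0
    · exact ⟨0, by rw [hL0, hp]⟩
    · obtain ⟨y₀, hy₀ne, hy₀grad⟩ :=
        legendre_surj_aux G hcont hC2 hhomog hzero hpos c hcpos hGlower p hp
      refine ⟨y₀, ?_⟩
      rw [hLy y₀ hy₀ne, hy₀grad, smul_smul]
      norm_num
  -- lower bound `c‖y‖ ≤ ‖L y‖`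
  have hLlow : ∀ y : EuclideanSpace ℝ (Fin n), c * ‖y‖ ≤ ‖L y‖ := by
    intro y
    by_cases hy : y = 0
    · subst hy; rw [hL0]; simp
    · have hny : 0 < ‖y‖ := norm_pos_iff.mpr hy
      have h1 : c * ‖y‖ ^ 2 ≤ G y := hGlower y
      have h2 : G y = ⟪L y, y⟫_ℝ := (hEuler y).symm
      have h3 : ⟪L y, y⟫_ℝ ≤ ‖L y‖ * ‖y‖ := real_inner_le_norm _ _
      have h4 : c * ‖y‖ * ‖y‖ ≤ ‖L y‖ * ‖y‖ := by nlinarith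
      exact le_of_mul_le_mul_right h4 hny
  -- properness
  have hproper : IsProperMap L := by
    rw [isProperMap_iff_isCompact_preimage]
    refine ⟨hLcont, fun K hK => ?_⟩
    obtain ⟨r, hr⟩ := hK.isBounded.subset_closedBall 0
    apply Metric.isCompact_of_isClosed_isBounded (hK.isClosed.preimage hLcont)
    apply Bornology.IsBounded.subset (Metric.isBounded_closedBall (x := (0:EuclideanSpace ℝ (Fin n))) (r := r / c))
    intro y hy
    have h1 : L y ∈ Metric.closedBall (0:EuclideanSpace ℝ (Fin n)) r := hr hy
    rw [Metric.mem_closedBall, dist_zero_right] at h1 ⊢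
    have := hLlow y
    rw [le_div_iff₀ hcpos]
    nlinarith
  -- assembling the homeomorphism
  set e : EuclideanSpace ℝ (Fin n) ≃ EuclideanSpace ℝ (Fin n) :=
    Equiv.ofBijective L ⟨hinj, hsurj⟩ with hedef
  have hopen : IsOpenMap L := by
    intro U hU
    have h1 : IsClosed (L '' Uᶜ) := hproper.isClosedMap _ hU.isClosed_compl
    have h2 : L '' U = (L '' Uᶜ)ᶜ := by
      rw [Set.image_compl_eq ⟨hinj, hsurj⟩, compl_compl]
    rw [h2]
    exact h1.isOpen_compl
  refine ⟨Equiv.toHomeomorphOfContinuousOpen e hLcont hopen, ?_, ?_⟩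
  · show L 0 = 0
    exact hL0
  · intro y hy
    show L y = (1 / 2 : ℝ) • gradient G y
    exact hLy y hy
end
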